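/- For all z ∈ ℂ with 0 < |z| < 1, the function f(z) = 1/(z · log(e/|z|)) satisfies ∂f/∂z̄ = 1 / (2 |z|² log²(e/|z|)), where ∂/∂z̄ = (1/2)(∂/∂x + i ∂/∂y). Consequently, the ℂ²-valued form α(z) = f(z)·(1, −i) dz satisfies ∂̄α = −ω^{z̄} ∧ α on the punctured unit disc, where ω^{z̄} = (i/2)/(z̄ log(e/|z|)) · [[0, −1],[1, 0]] dz̄. -/

import Mathlib

open Complex

noncomputable section

/-- `log(e/|z|) = 1 − log|z|`. -/
def Lg (z : ℂ) : ℝ := 1 - Real.log (‖z‖)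

/-- The function `f(z) = 1/(z log(e/|z|))`. -/
def fEx (z : ℂ) : ℂ := (z * (Lg z : ℝ))⁻¹

/-- The coefficient matrix of `ω^{z̄} = (i/2)/(z̄ log(e/|z|)) [[0,-1],[1,0]] dz̄`. -/
def Wcoef (z : ℂ) : Matrix (Fin 2) (Fin 2) ℂ :=
  ((Complex.I / 2) / ((starRingEnd ℂ) z * (Lg z : ℝ))) • !![0, -1; 1, 0]

/-- On the punctured unit disc, `f(z) = 1/(z log(e/|z|))` satisfies
`∂f/∂z̄ = 1/(2|z|² log²(e/|z|))`; consequently `α = f·(1,−i) dz` satisfies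
`∂̄α = −ω^{z̄} ∧ α` with `ω^{z̄} = (i/2)/(z̄ log(e/|z|)) [[0,−1],[1,0]] dz̄`. -/
lemma sq_split (w : ℂ) : w.re * w.re + w.im * w.im = ‖w‖ ^ 2 := by
  rw [Complex.sq_norm, Complex.normSq_apply]

lemma fEx_eq : fEx = fun w : ℂ =>
    (w * (((1:ℝ) - (1/2) * Real.log (w.re * w.re + w.im * w.im) : ℝ) : ℂ))⁻¹ := by
  funext w
  have h : Real.log (w.re * w.re + w.im * w.im) = 2 * Real.log (‖w‖) := by
    rw [sq_split, Real.log_pow]; norm_num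
  simp only [fEx, Lg, h]
  norm_num
  exact Or.inl (by ring)

theorem statement12 (z : ℂ) (h0 : 0 < ‖z‖) (h1 : ‖z‖ < 1) :
    DifferentiableAt ℝ fEx z ∧
    (1/2 : ℂ) * ((fderiv ℝ fEx z) 1 + Complex.I * (fderiv ℝ fEx z) Complex.I)
      = (((2 * ‖z‖ ^ 2 * Lg z ^ 2 : ℝ) : ℂ))⁻¹ ∧
    -- the (0,1)-derivative of the ℂ²-valued coefficient of α equals −W·(coefficient of α)
    ((1/2 : ℂ) * ((fderiv ℝ fEx z) 1 + Complex.I * (fderiv ℝ fEx z) Complex.I))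
        • ![(1 : ℂ), -Complex.I]
      = -((Wcoef z).mulVec (fun i => fEx z * ![(1 : ℂ), -Complex.I] i)) := by
  have hz : z ≠ 0 := by simpa using h0.ne'
  have hL0 : 0 < Lg z := by
    have := Real.log_neg h0 h1
    unfold Lg; linarith
  have hLne : Lg z ≠ 0 := hL0.ne'
  have hs0 : z.re * z.re + z.im * z.im ≠ 0 := by
    rw [sq_split]; exact pow_ne_zero _ h0.ne'
  have hLg : (1:ℝ) - 1/2 * Real.log (z.re * z.re + z.im * z.im) = Lg z := by
    have h : Real.log (z.re * z.re + z.im * z.im) = 2 * Real.log (‖z‖) := by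
      rw [sq_split, Real.log_pow]; norm_num
    rw [h]; unfold Lg; ring
  have hre : HasFDerivAt (fun w : ℂ => w.re) Complex.reCLM z := Complex.reCLM.hasFDerivAt
  have him : HasFDerivAt (fun w : ℂ => w.im) Complex.imCLM z := Complex.imCLM.hasFDerivAt
  have hns : HasFDerivAt (fun w : ℂ => w.re * w.re + w.im * w.im)
      (z.re • Complex.reCLM + z.re • Complex.reCLM +
        (z.im • Complex.imCLM + z.im • Complex.imCLM)) z := (hre.mul hre).add (him.mul him)
  have hlog := (Real.hasDerivAt_log hs0).comp_hasFDerivAt z hns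
  have hL := (hlog.const_mul ((1:ℝ)/2)).const_sub 1
  have hC := Complex.ofRealCLM.hasFDerivAt.comp z hL
  have hmul := (hasFDerivAt_id (𝕜 := ℝ) z).mul hC
  have hgz : z * (((1:ℝ) - (1/2) * Real.log (z.re * z.re + z.im * z.im) : ℝ) : ℂ) ≠ 0 := by
    rw [hLg]
    exact mul_ne_zero hz (by exact_mod_cast hLne)
  have hinv := (hasDerivAt_inv hgz).comp_hasFDerivAt z hmul
  have H : HasFDerivAt fEx
      (-((z * (((1:ℝ) - (1/2) * Real.log (z.re * z.re + z.im * z.im) : ℝ) : ℂ)) ^ 2)⁻¹ •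
        (z • (Complex.ofRealCLM.comp
            (-(((1:ℝ)/2) • (z.re * z.re + z.im * z.im)⁻¹ •
              (z.re • Complex.reCLM + z.re • Complex.reCLM +
                (z.im • Complex.imCLM + z.im • Complex.imCLM))))) +
          (((1:ℝ) - (1/2) * Real.log (z.re * z.re + z.im * z.im) : ℝ) : ℂ) •
            ContinuousLinearMap.id ℝ ℂ)) z := by
    rw [fEx_eq]; exact hinv
  have e1 := congrArg (fun (T : ℂ →L[ℝ] ℂ) => T 1) H.fderiv
  have eI := congrArg (fun (T : ℂ →L[ℝ] ℂ) => T Complex.I) H.fderiv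
  simp only [ContinuousLinearMap.add_apply, ContinuousLinearMap.smul_apply,
    ContinuousLinearMap.comp_apply, ContinuousLinearMap.neg_apply, ContinuousLinearMap.id_apply,
    Complex.ofRealCLM_apply, Complex.reCLM_apply, Complex.imCLM_apply,
    Complex.one_re, Complex.one_im, Complex.I_re, Complex.I_im] at e1 eI
  rw [hLg] at e1 eI
  have hLne' : ((Lg z : ℝ) : ℂ) ≠ 0 := by exact_mod_cast hLne
  have hS : ((z.re:ℂ) * z.re + (z.im:ℂ) * z.im) ≠ 0 := by exact_mod_cast hs0
  have hz' : ((z.re:ℂ) + (z.im:ℂ) * Complex.I) ≠ 0 := by rw [Complex.re_add_im]; exact hz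
  have key : (1/2 : ℂ) * ((fderiv ℝ fEx z) 1 + Complex.I * (fderiv ℝ fEx z) Complex.I)
      = (((2 * ‖z‖ ^ 2 * Lg z ^ 2 : ℝ) : ℂ))⁻¹ := by
    rw [e1, eI, ← sq_split z]
    push_cast
    simp only [smul_eq_mul, Complex.real_smul, mul_one, mul_zero, add_zero, zero_add]
    push_cast
    have hzab : z = z.re + z.im * I := (Complex.re_add_im z).symm
    set L := ((Lg z:ℝ):ℂ)
    set a := (z.re:ℂ)
    set b := (z.im:ℂ)
    have hab : a * a + b * b ≠ 0 := hS
    rw [hzab]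
    field_simp
    ring_nf
    simp only [Complex.I_sq]
    ring_nf
  refine ⟨H.differentiableAt, key, ?_⟩
  rw [key]
  have hcz : (starRingEnd ℂ) z * z = ((‖z‖ ^ 2 : ℝ) : ℂ) := by
    rw [mul_comm, Complex.mul_conj, Complex.sq_norm]
  have hczne : (starRingEnd ℂ) z ≠ 0 := by simpa using hz
  funext i
  have habsne : ((‖z‖ : ℝ) : ℂ) ≠ 0 := by exact_mod_cast h0.ne'
  push_cast at hcz
  fin_cases i <;>
  · simp [Wcoef, Matrix.mulVec, dotProduct, Fin.sum_univ_two, fEx, Matrix.smul_apply]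
    field_simp [hLne', habsne]
    simp only [sq, Complex.I_mul_I]
    linear_combination hcz
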